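/- Let W be a finite reflection group acting on V = ℚⁿ with degrees d₁,…,dₙ, let R = ℚ[V] be graded with variables in degree 2, and let θ ∈ R^W be homogeneous of degree 2k. Then the Hilbert series of Q_m = R^W + θ^m·R is p(t) = (1 - t^{2mk}) / ∏_{i=1}^n (1 - t^{2d_i}) + t^{2mk} / (1 - t²)ⁿ. -/

import Mathlib

open MvPolynomial PowerSeries

/-- The subring of `W`-invariants of a commutative ring with `W`-action. -/
def fixedSubring (W R : Type*) [Group W] [CommRing R] [MulSemiringAction W R] :
    Subring R where
  carrier := {x | ∀ w : W, w • x = x}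
  mul_mem' := by intro a b ha hb w; rw [smul_mul', ha w, hb w]
  one_mem' := by intro w; exact smul_one w
  add_mem' := by intro a b ha hb w; rw [smul_add, ha w, hb w]
  zero_mem' := by intro w; exact smul_zero w
  neg_mem' := by intro a ha w; rw [smul_neg, ha w]

/-- The Hilbert series (in cohomological grading, variables in degree 2) of a subset `S`
of the polynomial ring: the coefficient of `t^(2j)` is the dimension of the span of the
homogeneous elements of `S` of (polynomial) degree `j`; odd coefficients vanish. -/
noncomputable def cohomHilbertSeries (n : ℕ) (S : Set (MvPolynomial (Fin n) ℚ)) :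
    PowerSeries ℚ :=
  PowerSeries.mk fun d =>
    if Even d then
      (Module.finrank ℚ (Submodule.span ℚ {f ∈ S | f.IsHomogeneous (d / 2)}) : ℚ)
    else 0

section Aux

variable {n : ℕ} {W : Type*} [Group W] [MulSemiringAction W (MvPolynomial (Fin n) ℚ)]

/-- Homogeneous component of a product with a homogeneous factor. -/
lemma hc_mul_homog (θ' y : MvPolynomial (Fin n) ℚ) (e j : ℕ) (hθ' : θ'.IsHomogeneous e) :
    homogeneousComponent j (θ' * y) =
      if e ≤ j then θ' * homogeneousComponent (j - e) y else 0 := by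
  conv_lhs => rw [← sum_homogeneousComponent y]
  rw [Finset.mul_sum, map_sum]
  have hterm : ∀ i : ℕ, homogeneousComponent j (θ' * homogeneousComponent i y)
      = if j = e + i then θ' * homogeneousComponent i y else 0 := by
    intro i
    exact homogeneousComponent_of_mem ((mem_homogeneousSubmodule _ _).2
      (hθ'.mul (homogeneousComponent_isHomogeneous i y)))
  rw [Finset.sum_congr rfl fun i _ => hterm i]
  by_cases he : e ≤ j
  · rw [if_pos he]
    have : ∀ i ∈ Finset.range (y.totalDegree + 1),
        (if j = e + i then θ' * homogeneousComponent i y else 0)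
          = if j - e = i then θ' * homogeneousComponent i y else 0 := by
      intro i _
      exact if_congr (by omega) rfl rfl
    rw [Finset.sum_congr rfl this, Finset.sum_ite_eq]
    by_cases hr : j - e ∈ Finset.range (y.totalDegree + 1)
    · rw [if_pos hr]
    · rw [if_neg hr, homogeneousComponent_eq_zero, mul_zero]
      simp only [Finset.mem_range] at hr; omega
  · rw [if_neg he]
    apply Finset.sum_eq_zero
    intro i _
    rw [if_neg (by omega)]

lemma hc_smul
    (hgraded : ∀ (w : W) (f : MvPolynomial (Fin n) ℚ) (j : ℕ),
        f.IsHomogeneous j → (w • f).IsHomogeneous j)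
    (w : W) (f : MvPolynomial (Fin n) ℚ) (j : ℕ) :
    homogeneousComponent j (w • f) = w • homogeneousComponent j f := by
  conv_lhs => rw [← sum_homogeneousComponent f]
  rw [Finset.smul_sum, map_sum]
  have hterm : ∀ i : ℕ, homogeneousComponent j (w • homogeneousComponent i f)
      = if j = i then w • homogeneousComponent i f else 0 := by
    intro i
    exact homogeneousComponent_of_mem ((mem_homogeneousSubmodule _ _).2
      (hgraded w _ i (homogeneousComponent_isHomogeneous i f)))
  rw [Finset.sum_congr rfl fun i _ => hterm i, Finset.sum_ite_eq]
  by_cases hr : j ∈ Finset.range (f.totalDegree + 1)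
  · rw [if_pos hr]
  · rw [if_neg hr, homogeneousComponent_eq_zero, smul_zero]
    simp only [Finset.mem_range] at hr; omega

lemma smul_C_eq
    (hgraded : ∀ (w : W) (f : MvPolynomial (Fin n) ℚ) (j : ℕ),
        f.IsHomogeneous j → (w • f).IsHomogeneous j)
    (w : W) (q : ℚ) : w • (C q : MvPolynomial (Fin n) ℚ) = MvPolynomial.C q := by
  have h0 : (w • (C q : MvPolynomial (Fin n) ℚ)) ∈ homogeneousSubmodule (Fin n) ℚ 0 :=
    (mem_homogeneousSubmodule _ _).2 (hgraded w _ 0 (isHomogeneous_C _ _))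
  have h1 : w • (C q : MvPolynomial (Fin n) ℚ)
      = MvPolynomial.C (coeff 0 (w • (C q : MvPolynomial (Fin n) ℚ))) := by
    have h := homogeneousComponent_of_mem (m := 0) h0
    rw [if_pos rfl] at h
    conv_lhs => rw [← h, homogeneousComponent_zero]
  set ψ : ℚ →+* ℚ :=
    (constantCoeff (R := ℚ) (σ := Fin n)).comp
      ((MulSemiringAction.toRingHom W (MvPolynomial (Fin n) ℚ) w).comp C) with hψ
  have h2 : coeff 0 (w • (C q : MvPolynomial (Fin n) ℚ)) = q := by
    have h3 : ψ q = q := by rw [eq_ratCast ψ q, Rat.cast_id]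
    exact h3
  rw [h1, h2]

lemma smul_rat_smul
    (hgraded : ∀ (w : W) (f : MvPolynomial (Fin n) ℚ) (j : ℕ),
        f.IsHomogeneous j → (w • f).IsHomogeneous j)
    (w : W) (q : ℚ) (f : MvPolynomial (Fin n) ℚ) : w • (q • f) = q • (w • f) := by
  rw [MvPolynomial.smul_eq_C_mul, smul_mul', smul_C_eq hgraded, ← MvPolynomial.smul_eq_C_mul]

end Aux

section Rank

variable {n : ℕ} {W : Type*} [Group W] [MulSemiringAction W (MvPolynomial (Fin n) ℚ)]

variable (hgraded : ∀ (w : W) (f : MvPolynomial (Fin n) ℚ) (j : ℕ),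
        f.IsHomogeneous j → (w • f).IsHomogeneous j)

local notation "P" => MvPolynomial (Fin n) ℚ

/-- The invariants as a `ℚ`-submodule. -/
noncomputable def invSubmodule (hgraded : ∀ (w : W) (f : MvPolynomial (Fin n) ℚ) (j : ℕ),
        f.IsHomogeneous j → (w • f).IsHomogeneous j) : Submodule ℚ P where
  carrier := {x | ∀ w : W, w • x = x}
  add_mem' := by intro a b ha hb w; rw [smul_add, ha w, hb w]
  zero_mem' := by intro w; exact smul_zero w
  smul_mem' := by intro q x hx w; rw [smul_rat_smul hgraded, hx w]

lemma hs_fd (j : ℕ) : FiniteDimensional ℚ (homogeneousSubmodule (Fin n) ℚ j) := by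
  have hle : homogeneousSubmodule (Fin n) ℚ j ≤ restrictTotalDegree (Fin n) ℚ j := by
    intro p hp
    exact (mem_restrictTotalDegree _ _ _).2 ((mem_homogeneousSubmodule _ _).1 hp).totalDegree_le
  exact Submodule.finiteDimensional_of_le hle

lemma span_hom_le (S : Set P) (j : ℕ) :
    Submodule.span ℚ {f ∈ S | f.IsHomogeneous j} ≤ homogeneousSubmodule (Fin n) ℚ j :=
  Submodule.span_le.2 fun f hf => (mem_homogeneousSubmodule _ _).2 hf.2

lemma span_univ_hom (j : ℕ) :
    Submodule.span ℚ {f ∈ (Set.univ : Set P) | f.IsHomogeneous j}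
      = homogeneousSubmodule (Fin n) ℚ j := by
  have h : {f ∈ (Set.univ : Set P) | f.IsHomogeneous j}
      = ↑(homogeneousSubmodule (Fin n) ℚ j) := by
    ext f; simp [mem_homogeneousSubmodule]
  rw [h, Submodule.span_eq]

/-- In low degrees (`j < e`) the span of homogeneous elements of `Q_m` agrees with that of the
invariants. -/
lemma span_low (hgraded : ∀ (w : W) (f : MvPolynomial (Fin n) ℚ) (j : ℕ),
        f.IsHomogeneous j → (w • f).IsHomogeneous j) (τ : P) (e : ℕ) (hτe : τ.IsHomogeneous e) (j : ℕ) (hj : j < e) :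
    Submodule.span ℚ {f ∈ {x : P | ∃ a ∈ fixedSubring W P,
        ∃ y : P, x = a + τ * y} | f.IsHomogeneous j}
      = Submodule.span ℚ
          {f ∈ ((fixedSubring W P : Subring P) : Set P) | f.IsHomogeneous j} := by
  apply le_antisymm
  · rw [Submodule.span_le]
    rintro f ⟨⟨a, haW, y, rfl⟩, hfj⟩
    have h1 : homogeneousComponent j (a + τ * y) = a + τ * y := by
      rw [homogeneousComponent_of_mem ((mem_homogeneousSubmodule _ _).2 hfj), if_pos rfl]
    have h2 : homogeneousComponent j (a + τ * y) = homogeneousComponent j a := by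
      rw [map_add, hc_mul_homog τ y e j hτe, if_neg (by omega), add_zero]
    have haWj : homogeneousComponent j a ∈ fixedSubring W P := by
      intro w
      rw [← hc_smul hgraded, haW w]
    rw [← h1, h2]
    exact Submodule.subset_span ⟨haWj, homogeneousComponent_isHomogeneous j a⟩
  · apply Submodule.span_mono
    rintro f ⟨hfW, hfj⟩
    exact ⟨⟨f, hfW, 0, by ring⟩, hfj⟩

lemma rank_step (hgraded : ∀ (w : W) (f : MvPolynomial (Fin n) ℚ) (j : ℕ),
        f.IsHomogeneous j → (w • f).IsHomogeneous j) (τ : P) (hτW : τ ∈ fixedSubring W P) (hτ0 : τ ≠ 0)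
    (e : ℕ) (hτe : τ.IsHomogeneous e) (j : ℕ) (hje : e ≤ j) :
    Module.finrank ℚ (Submodule.span ℚ {f ∈ {x : P | ∃ a ∈ fixedSubring W P,
        ∃ y : P, x = a + τ * y} | f.IsHomogeneous j})
      + Module.finrank ℚ (Submodule.span ℚ
          {f ∈ ((fixedSubring W P : Subring P) : Set P) | f.IsHomogeneous (j - e)})
    = Module.finrank ℚ (Submodule.span ℚ
          {f ∈ ((fixedSubring W P : Subring P) : Set P) | f.IsHomogeneous j})
      + Module.finrank ℚ (Submodule.span ℚ
          {f ∈ (Set.univ : Set P) | f.IsHomogeneous (j - e)}) := by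
  classical
  set A : ℕ → Submodule ℚ P := fun i => Submodule.span ℚ
      {f ∈ ((fixedSubring W P : Subring P) : Set P) | f.IsHomogeneous i} with hA
  set T : Submodule ℚ P :=
      Submodule.map (LinearMap.mulLeft ℚ τ) (homogeneousSubmodule (Fin n) ℚ (j - e)) with hT
  have hinj : Function.Injective (LinearMap.mulLeft ℚ τ) := by
    intro x y h
    simp only [LinearMap.mulLeft_apply] at h
    exact mul_left_cancel₀ hτ0 h
  have hAInv : ∀ i, A i ≤ invSubmodule hgraded := by
    intro i
    rw [hA, Submodule.span_le]
    rintro f ⟨hfW, -⟩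
    exact hfW
  -- the span of Q_m in degree j is A j ⊔ T
  have hspan : Submodule.span ℚ {f ∈ {x : P | ∃ a ∈ fixedSubring W P,
      ∃ y : P, x = a + τ * y} | f.IsHomogeneous j} = A j ⊔ T := by
    apply le_antisymm
    · rw [Submodule.span_le]
      rintro f ⟨⟨a, haW, y, rfl⟩, hfj⟩
      have h1 : homogeneousComponent j (a + τ * y) = a + τ * y := by
        rw [homogeneousComponent_of_mem ((mem_homogeneousSubmodule _ _).2 hfj), if_pos rfl]
      have h2 : homogeneousComponent j (a + τ * y)
          = homogeneousComponent j a + τ * homogeneousComponent (j - e) y := by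
        rw [map_add, hc_mul_homog τ y e j hτe, if_pos hje]
      have haWj : homogeneousComponent j a ∈ fixedSubring W P := by
        intro w; rw [← hc_smul hgraded, haW w]
      have hmem1 : homogeneousComponent j a ∈ A j :=
        Submodule.subset_span ⟨haWj, homogeneousComponent_isHomogeneous j a⟩
      have hmem2 : τ * homogeneousComponent (j - e) y ∈ T :=
        ⟨homogeneousComponent (j - e) y, homogeneousComponent_mem _ _, rfl⟩
      have : a + τ * y ∈ A j ⊔ T := by
        rw [← h1, h2]
        exact Submodule.add_mem _ (Submodule.mem_sup_left hmem1) (Submodule.mem_sup_right hmem2)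
      exact this
    · apply sup_le
      · apply Submodule.span_mono
        rintro f ⟨hfW, hfj⟩
        exact ⟨⟨f, hfW, 0, by ring⟩, hfj⟩
      · rintro x ⟨b, hb, rfl⟩
        apply Submodule.subset_span
        refine ⟨⟨0, Subring.zero_mem _, b, by simp [LinearMap.mulLeft_apply]⟩, ?_⟩
        have := hτe.mul ((mem_homogeneousSubmodule _ _).1 hb)
        simpa [LinearMap.mulLeft_apply, Nat.add_sub_cancel' hje] using this
  -- the intersection is τ • A (j - e)
  have hint : A j ⊓ T = Submodule.map (LinearMap.mulLeft ℚ τ) (A (j - e)) := by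
    apply le_antisymm
    · rintro x ⟨hxA, b, hb, rfl⟩
      simp only [LinearMap.mulLeft_apply] at hxA ⊢
      have hxInv : ∀ w : W, w • (τ * b) = τ * b := hAInv j hxA
      have hbInv : b ∈ fixedSubring W P := by
        intro w
        apply mul_left_cancel₀ hτ0
        calc τ * (w • b) = (w • τ) * (w • b) := by rw [hτW w]
          _ = w • (τ * b) := (smul_mul' w τ b).symm
          _ = τ * b := hxInv w
      exact ⟨b, Submodule.subset_span ⟨hbInv, (mem_homogeneousSubmodule _ _).1 hb⟩, rfl⟩
    · rw [Submodule.map_le_iff_le_comap, hA, Submodule.span_le]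
      rintro s ⟨hsW, hsj⟩
      simp only [Submodule.mem_comap, LinearMap.mulLeft_apply]
      constructor
      · apply Submodule.subset_span
        refine ⟨fun w => by
          simp only [LinearMap.mulLeft_apply]
          rw [smul_mul', hτW w, hsW w], ?_⟩
        have := hτe.mul hsj
        rwa [Nat.add_sub_cancel' hje] at this
      · exact ⟨s, (mem_homogeneousSubmodule _ _).2 hsj, rfl⟩
  haveI := hs_fd (n := n) j
  haveI := hs_fd (n := n) (j - e)
  have hT_le : T ≤ homogeneousSubmodule (Fin n) ℚ j := by
    rintro x ⟨b, hb, rfl⟩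
    simp only [LinearMap.mulLeft_apply]
    have := hτe.mul ((mem_homogeneousSubmodule _ _).1 hb)
    rw [Nat.add_sub_cancel' hje] at this
    exact (mem_homogeneousSubmodule _ _).2 this
  haveI : FiniteDimensional ℚ (A j) :=
    Submodule.finiteDimensional_of_le (span_hom_le _ j)
  haveI : FiniteDimensional ℚ (A (j - e)) :=
    Submodule.finiteDimensional_of_le (span_hom_le _ (j - e))
  haveI : FiniteDimensional ℚ T := Submodule.finiteDimensional_of_le hT_le
  have hsup := Submodule.finrank_sup_add_finrank_inf_eq (A j) T
  have hTrank : Module.finrank ℚ T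
      = Module.finrank ℚ (homogeneousSubmodule (Fin n) ℚ (j - e)) :=
    (Submodule.equivMapOfInjective _ hinj _).finrank_eq.symm
  have hIrank : Module.finrank ℚ (A j ⊓ T : Submodule ℚ P) = Module.finrank ℚ (A (j - e)) := by
    rw [hint]
    exact (Submodule.equivMapOfInjective _ hinj _).finrank_eq.symm
  rw [hTrank, hIrank] at hsup
  have e1 : Submodule.span ℚ {f ∈ ((fixedSubring W P : Subring P) : Set P) | f.IsHomogeneous j}
      = A j := rfl
  have e2 : Submodule.span ℚ
      {f ∈ ((fixedSubring W P : Subring P) : Set P) | f.IsHomogeneous (j - e)} = A (j - e) := rfl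
  rw [hspan, span_univ_hom, e1, e2]
  omega

end Rank

/-- For a finite (reflection) group `W` acting on `R = ℚ[V]` (variables in
cohomological degree 2) with invariant ring a polynomial ring on generators of degrees
`2d₁,…,2dₙ`, `R` free of rank `|W|` over `R^W`, and `θ ∈ R^W` homogeneous of degree `2k`,
the Hilbert series of `Q_m = R^W + θ^m·R` is
`(1 - t^{2mk})/∏(1 - t^{2dᵢ}) + t^{2mk}/(1 - t²)ⁿ`. -/
theorem Qm_hilbert_series
    (n : ℕ) (W : Type*) [Group W] [Fintype W]
    [MulSemiringAction W (MvPolynomial (Fin n) ℚ)]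
    (hgraded : ∀ (w : W) (f : MvPolynomial (Fin n) ℚ) (j : ℕ),
        f.IsHomogeneous j → (w • f).IsHomogeneous j)
    (d : Fin n → ℕ)
    (hInv : cohomHilbertSeries n
          ((fixedSubring W (MvPolynomial (Fin n) ℚ)) : Set (MvPolynomial (Fin n) ℚ)) *
        ∏ i, (1 - (PowerSeries.X : PowerSeries ℚ) ^ (2 * d i)) = 1)
    (hR : cohomHilbertSeries n (Set.univ) *
        (1 - (PowerSeries.X : PowerSeries ℚ) ^ 2) ^ n = 1)
    (θ : MvPolynomial (Fin n) ℚ) (hθW : θ ∈ fixedSubring W (MvPolynomial (Fin n) ℚ))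
    (hθ0 : θ ≠ 0) (k : ℕ) (hθhom : θ.IsHomogeneous k)
    (bR : Fin (Fintype.card W) → MvPolynomial (Fin n) ℚ)
    (hfree : ∀ x : MvPolynomial (Fin n) ℚ,
        ∃! c : Fin (Fintype.card W) → fixedSubring W (MvPolynomial (Fin n) ℚ),
          x = ∑ i, (c i : MvPolynomial (Fin n) ℚ) * bR i)
    (m : ℕ) :
    cohomHilbertSeries n
        {x : MvPolynomial (Fin n) ℚ | ∃ a ∈ fixedSubring W (MvPolynomial (Fin n) ℚ),
          ∃ y : MvPolynomial (Fin n) ℚ, x = a + θ ^ m * y} *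
      (∏ i, (1 - (PowerSeries.X : PowerSeries ℚ) ^ (2 * d i))) *
      (1 - (PowerSeries.X : PowerSeries ℚ) ^ 2) ^ n =
    (1 - (PowerSeries.X : PowerSeries ℚ) ^ (2 * m * k)) *
        (1 - (PowerSeries.X : PowerSeries ℚ) ^ 2) ^ n +
      (PowerSeries.X : PowerSeries ℚ) ^ (2 * m * k) *
        ∏ i, (1 - (PowerSeries.X : PowerSeries ℚ) ^ (2 * d i)) := by
  classical
  have hτe : (θ ^ m).IsHomogeneous (m * k) := by
    have h := hθhom.pow m
    rwa [mul_comm] at h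
  have hτ0 : θ ^ m ≠ 0 := pow_ne_zero m hθ0
  have hτW : θ ^ m ∈ fixedSubring W (MvPolynomial (Fin n) ℚ) := by
    intro w; rw [smul_pow', hθW w]
  have key : cohomHilbertSeries n
        {x : MvPolynomial (Fin n) ℚ | ∃ a ∈ fixedSubring W (MvPolynomial (Fin n) ℚ),
          ∃ y : MvPolynomial (Fin n) ℚ, x = a + θ ^ m * y}
      + (PowerSeries.X : PowerSeries ℚ) ^ (2 * m * k) * cohomHilbertSeries n
          ((fixedSubring W (MvPolynomial (Fin n) ℚ)) : Set (MvPolynomial (Fin n) ℚ))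
      = cohomHilbertSeries n
          ((fixedSubring W (MvPolynomial (Fin n) ℚ)) : Set (MvPolynomial (Fin n) ℚ))
      + (PowerSeries.X : PowerSeries ℚ) ^ (2 * m * k) * cohomHilbertSeries n Set.univ := by
    ext deg
    have he : 2 * m * k = m * k + m * k := by ring
    simp only [map_add, cohomHilbertSeries, coeff_mk, PowerSeries.coeff_X_pow_mul']
    by_cases hE : 2 * m * k ≤ deg
    · rw [if_pos hE, if_pos hE]
      by_cases hEv : Even deg
      · obtain ⟨j, hj⟩ := id hEv
        have hEv' : Even (deg - 2 * m * k) := ⟨j - m * k, by omega⟩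
        simp only [if_pos hEv, if_pos hEv']
        have hd2 : deg / 2 = j := by omega
        have hd2' : (deg - 2 * m * k) / 2 = j - m * k := by omega
        rw [hd2, hd2']
        have hstep := rank_step hgraded (θ ^ m) hτW hτ0 (m * k) hτe j (by omega)
        exact_mod_cast hstep
      · have hEv' : ¬ Even (deg - 2 * m * k) := by
          rw [Nat.even_iff] at hEv ⊢; omega
        simp only [if_neg hEv, if_neg hEv']
    · rw [if_neg hE, if_neg hE, add_zero, add_zero]
      by_cases hEv : Even deg
      · obtain ⟨j, hj⟩ := id hEv
        simp only [if_pos hEv]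
        have hd2 : deg / 2 = j := by omega
        rw [hd2]
        rw [span_low hgraded (θ ^ m) (m * k) hτe j (by omega)]
      · simp only [if_neg hEv]
  linear_combination key * (∏ i, (1 - (PowerSeries.X : PowerSeries ℚ) ^ (2 * d i)))
        * ((1 - (PowerSeries.X : PowerSeries ℚ) ^ 2) ^ n)
      + (1 - (PowerSeries.X : PowerSeries ℚ) ^ (2 * m * k))
        * ((1 - (PowerSeries.X : PowerSeries ℚ) ^ 2) ^ n) * hInv
      + (PowerSeries.X : PowerSeries ℚ) ^ (2 * m * k)
        * (∏ i, (1 - (PowerSeries.X : PowerSeries ℚ) ^ (2 * d i))) * hR
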